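/- Let F₁, F₂ ∈ 𝒮 with F₁ ≺ F₂. Then there exists a multistep skew product G ∈ 𝒮 with F₁ ≺ G ≺ F₂. -/

import Mathlib

open Set MeasureTheory Filter Topology

namespace SkewPaper

/-- A bi-infinite sequence over the alphabet `{1,…,N}` (modelled as `Fin N`) is allowed
by the 0-1 transition matrix `A`. -/
def Allowed {N : ℕ} (A : Fin N → Fin N → Bool) (ω : ℤ → Fin N) : Prop :=
  ∀ n : ℤ, A (ω n) (ω (n + 1)) = true

/-- The subshift of finite type `Σ ⊆ {1,…,N}^ℤ` determined by the transition matrix `A`,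
with the product (= metric `d(ω̄,ω) = 2^{-min{|n| : ω̄ₙ ≠ ωₙ}}`) topology. -/
abbrev Sig (N : ℕ) (A : Fin N → Fin N → Bool) : Type :=
  {ω : ℤ → Fin N // Allowed A ω}

variable {N : ℕ} {A : Fin N → Fin N → Bool}

/-- The left shift `σ : Σ → Σ`. -/
def shift (ω : Sig N A) : Sig N A :=
  ⟨fun n => ω.1 (n + 1), fun n => ω.2 (n + 1)⟩

/-- The inverse `σ⁻¹` of the left shift. -/
def shiftInv (ω : Sig N A) : Sig N A :=
  ⟨fun n => ω.1 (n - 1), fun n => by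
    show A (ω.1 (n - 1)) (ω.1 (n + 1 - 1)) = true
    have h := ω.2 (n - 1)
    have e1 : n - 1 + 1 = n := by ring
    have e2 : n + 1 - 1 = n := by ring
    rw [e1] at h; rw [e2]; exact h⟩

/-- Topological transitivity of the shift `σ` on `Σ`. -/
def ShiftTransitive (N : ℕ) (A : Fin N → Fin N → Bool) : Prop :=
  ∀ U V : Set (Sig N A), IsOpen U → IsOpen V → U.Nonempty → V.Nonempty →
    ∃ n : ℕ, ((shift (A := A))^[n] '' U ∩ V).Nonempty

/-- The class `𝒮` of skew products `F(ω,x) = (σω, f_ω(x))` over the subshift `Σ`,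
with fiber `I = [0,1]`.  The fiber maps `f_ω` (encoded as maps `ℝ → ℝ` whose behaviour
is prescribed on `I`) are orientation-preserving `C¹` diffeomorphisms sending `I`
strictly inside itself, with `C¹` inverses `fInv ω`, and `ω ↦ f_ω` is continuous in the
`C¹` sense. -/
structure SkewSys (N : ℕ) (A : Fin N → Fin N → Bool) where
  f : Sig N A → ℝ → ℝ
  fInv : Sig N A → ℝ → ℝ
  contDiff : ∀ ω, ContDiffOn ℝ 1 (f ω) (Icc 0 1)
  deriv_pos : ∀ ω, ∀ x ∈ Icc (0:ℝ) 1, 0 < derivWithin (f ω) (Icc 0 1) x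
  maps_in : ∀ ω, MapsTo (f ω) (Icc 0 1) (Ioo 0 1)
  leftInv : ∀ ω, ∀ x ∈ Icc (0:ℝ) 1, fInv ω (f ω x) = x
  inv_contDiff : ∀ ω, ContDiffOn ℝ 1 (fInv ω) (Icc 0 1)
  cont : ContinuousOn (fun p : Sig N A × ℝ => f p.1 p.2) (univ ×ˢ Icc 0 1)
  cont_deriv : ContinuousOn
    (fun p : Sig N A × ℝ => derivWithin (f p.1) (Icc 0 1) p.2) (univ ×ˢ Icc 0 1)
  inv_cont : ContinuousOn (fun p : Sig N A × ℝ => fInv p.1 p.2) (univ ×ˢ Icc 0 1)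
  inv_cont_deriv : ContinuousOn
    (fun p : Sig N A × ℝ => derivWithin (fInv p.1) (Icc 0 1) p.2) (univ ×ˢ Icc 0 1)

/-- The skew product map `F : Σ × ℝ → Σ × ℝ`, `(ω,x) ↦ (σω, f_ω(x))`. -/
def FMap (F : SkewSys N A) : Sig N A × ℝ → Sig N A × ℝ :=
  fun p => (shift p.1, F.f p.1 p.2)

/-- The phase space `Σ × I`, viewed inside `Σ × ℝ`. -/
def phaseSpace (N : ℕ) (A : Fin N → Fin N → Bool) : Set (Sig N A × ℝ) :=
  univ ×ˢ Icc 0 1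

/-- The graph of `γ` drifts up: `F(Γ) > Γ`, i.e. the graph function
`ω ↦ f_{σ⁻¹ω}(γ(σ⁻¹ω))` of `F(Γ)` is pointwise strictly above `γ`. -/
def DriftsUp (F : SkewSys N A) (γ : Sig N A → ℝ) : Prop :=
  ∀ ω, γ ω < F.f (shiftInv ω) (γ (shiftInv ω))

/-- The graph of `γ` drifts down: `F(Γ) < Γ`. -/
def DriftsDown (F : SkewSys N A) (γ : Sig N A → ℝ) : Prop :=
  ∀ ω, F.f (shiftInv ω) (γ (shiftInv ω)) < γ ω

/-- `Up(F)`: the set of points `p = (ω,x)` drifting up, i.e. such that there is a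
continuous `γ : Σ → I` whose graph drifts up with `γ(ω) < x < f_{σ⁻¹ω}(γ(σ⁻¹ω))`. -/
def Up (F : SkewSys N A) : Set (Sig N A × ℝ) :=
  {p | ∃ γ : Sig N A → ℝ, Continuous γ ∧ (∀ ω, γ ω ∈ Icc (0:ℝ) 1) ∧ DriftsUp F γ ∧
    γ p.1 < p.2 ∧ p.2 < F.f (shiftInv p.1) (γ (shiftInv p.1))}

/-- `Down(F)`: the set of points drifting down. -/
def Down (F : SkewSys N A) : Set (Sig N A × ℝ) :=
  {p | ∃ γ : Sig N A → ℝ, Continuous γ ∧ (∀ ω, γ ω ∈ Icc (0:ℝ) 1) ∧ DriftsDown F γ ∧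
    F.f (shiftInv p.1) (γ (shiftInv p.1)) < p.2 ∧ p.2 < γ p.1}

/-- The anchored set `Indiff(F) = (Σ × I) \ (Up(F) ∪ Down(F))`. -/
def Indiff (F : SkewSys N A) : Set (Sig N A × ℝ) :=
  phaseSpace N A \ (Up F ∪ Down F)

/-- The nonwandering set `Ω(F)`: points `p ∈ Σ × I` such that every neighborhood `U`
of `p` in `Σ × I` satisfies `F^n(U) ∩ U ≠ ∅` for some `n ≥ 1`. -/
def NonWandering (F : SkewSys N A) : Set (Sig N A × ℝ) :=
  {p | p ∈ phaseSpace N A ∧ ∀ U : Set (Sig N A × ℝ), IsOpen U → p ∈ U →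
    ∃ n : ℕ, 1 ≤ n ∧ ∃ q ∈ U ∩ phaseSpace N A, (FMap F)^[n] q ∈ U ∩ phaseSpace N A}

/-- The partial order `F ≺ F̃` on `𝒮`: `f_ω(x) < f̃_ω(x)` for all `ω ∈ Σ`, `x ∈ I`. -/
def Prec (F G : SkewSys N A) : Prop :=
  ∀ ω, ∀ x ∈ Icc (0:ℝ) 1, F.f ω x < G.f ω x

/-- A skew product is multistep if its fiber maps depend only on finitely many
coordinates `ω_{-m}, …, ω_m` of `ω`. -/
def Multistep (F : SkewSys N A) : Prop :=
  ∃ m : ℕ, ∀ ω ω' : Sig N A, (∀ n : ℤ, n.natAbs ≤ m → ω.1 n = ω'.1 n) → F.f ω = F.f ω'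

/-- The `C¹` distance `dist(F,F̃) = max_ω dist_{C¹}(f_ω^{±1}, f̃_ω^{±1})` on `𝒮`. -/
noncomputable def SDist (F G : SkewSys N A) : ℝ :=
  ⨆ p : Sig N A × Icc (0:ℝ) 1,
    max
      (max |F.f p.1 p.2 - G.f p.1 p.2|
        |derivWithin (F.f p.1) (Icc 0 1) p.2 - derivWithin (G.f p.1) (Icc 0 1) p.2|)
      (max |F.fInv p.1 p.2 - G.fInv p.1 p.2|
        |derivWithin (F.fInv p.1) (Icc 0 1) p.2 - derivWithin (G.fInv p.1) (Icc 0 1) p.2|)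

/-- The standard measure `m = μ × Leb` on `Σ × I` (with `Leb` Lebesgue measure
restricted to `I = [0,1]`). -/
noncomputable def stdMeasure (μ : Measure (Sig N A)) : Measure (Sig N A × ℝ) :=
  μ.prod (volume.restrict (Icc 0 1))

/-- A family `(F_τ)_{τ ∈ (a,b)}` in `𝒮` is monotone increasing if `F_{τ₁} ≺ F_{τ₂}`
whenever `τ₁ < τ₂`. -/
def MonoFam (F : ℝ → SkewSys N A) (a b : ℝ) : Prop :=
  ∀ τ₁ ∈ Ioo a b, ∀ τ₂ ∈ Ioo a b, τ₁ < τ₂ → Prec (F τ₁) (F τ₂)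

/-- A family `(F_τ)_{τ ∈ (a,b)}` in `𝒮` is continuous in `τ` for the metric `dist`. -/
def ContFam (F : ℝ → SkewSys N A) (a b : ℝ) : Prop :=
  ∀ τ ∈ Ioo a b, ∀ ε : ℝ, 0 < ε → ∃ δ > 0,
    ∀ τ' ∈ Ioo a b, |τ' - τ| < δ → SDist (F τ') (F τ) < ε

/-- The pushforward `Γ ↦ F(Γ)` on graph functions: the graph of `pushGraph F γ`,
namely `ω ↦ f_{σ⁻¹ω}(γ(σ⁻¹ω))`, is the image `F(Γ)` of the graph `Γ` of `γ`. -/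
def pushGraph (F : SkewSys N A) (γ : Sig N A → ℝ) : Sig N A → ℝ :=
  fun ω => F.f (shiftInv ω) (γ (shiftInv ω))



lemma sig_closed : IsClosed {ω : ℤ → Fin N | Allowed A ω} := by
  have : {ω : ℤ → Fin N | Allowed A ω} = ⋂ n : ℤ, {ω : ℤ → Fin N | A (ω n) (ω (n+1)) = true} := by
    ext ω; simp [Allowed]
  rw [this]
  refine isClosed_iInter fun n => ?_
  have : {ω : ℤ → Fin N | A (ω n) (ω (n+1)) = true}
      = (fun ω : ℤ → Fin N => (ω n, ω (n+1))) ⁻¹' {p : Fin N × Fin N | A p.1 p.2 = true} := rfl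
  rw [this]
  exact (isClosed_discrete _).preimage ((continuous_apply n).prodMk (continuous_apply (n+1)))

instance : CompactSpace (Sig N A) :=
  isCompact_iff_compactSpace.mp sig_closed.isCompact

open Classical in
noncomputable def extWord (ω₀ : Sig N A) (m : ℕ) (w : ℤ → Fin N) : Sig N A :=
  if h : ∃ ω : Sig N A, ∀ n : ℤ, n.natAbs ≤ m → ω.1 n = w n then h.choose else ω₀

noncomputable def trunc (ω₀ : Sig N A) (m : ℕ) (ω : Sig N A) : Sig N A :=
  extWord ω₀ m (fun n => if n.natAbs ≤ m then ω.1 n else ω₀.1 n)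

lemma trunc_agree (ω₀ : Sig N A) (m : ℕ) (ω : Sig N A) :
    ∀ n : ℤ, n.natAbs ≤ m → (trunc ω₀ m ω).1 n = ω.1 n := by
  have h : ∃ ω' : Sig N A, ∀ n : ℤ, n.natAbs ≤ m →
      ω'.1 n = (fun n => if n.natAbs ≤ m then ω.1 n else ω₀.1 n) n :=
    ⟨ω, fun n hn => by simp [hn]⟩
  intro n hn
  have := h.choose_spec n hn
  simp only [trunc, extWord, dif_pos h]
  simpa [hn] using this

lemma trunc_eq (ω₀ : Sig N A) (m : ℕ) (ω ω' : Sig N A)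
    (h : ∀ n : ℤ, n.natAbs ≤ m → ω.1 n = ω'.1 n) :
    trunc ω₀ m ω = trunc ω₀ m ω' := by
  unfold trunc
  congr 1
  funext n
  by_cases hn : n.natAbs ≤ m <;> simp [hn, h]

lemma trunc_continuous (ω₀ : Sig N A) (m : ℕ) : Continuous (trunc ω₀ m) := by
  apply IsLocallyConstant.continuous
  rw [IsLocallyConstant.iff_exists_open]
  intro ω
  refine ⟨{ω' : Sig N A | ∀ n : ℤ, n.natAbs ≤ m → ω'.1 n = ω.1 n}, ?_, fun n _ => rfl,
    fun ω' h => trunc_eq ω₀ m ω' ω h⟩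
  have : {ω' : Sig N A | ∀ n : ℤ, n.natAbs ≤ m → ω'.1 n = ω.1 n}
      = ⋂ n ∈ Finset.Icc (-(m:ℤ)) (m:ℤ), {ω' : Sig N A | ω'.1 n = ω.1 n} := by
    ext ω'
    simp only [mem_setOf_eq, mem_iInter, Finset.mem_Icc]
    constructor
    · intro h n hn; exact h n (by omega)
    · intro h n hn; exact h n (by omega)
  rw [this]
  apply isOpen_biInter_finset
  intro n _
  have : {ω' : Sig N A | ω'.1 n = ω.1 n}
      = (fun ω' : Sig N A => ω'.1 n) ⁻¹' {ω.1 n} := rfl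
  rw [this]
  exact (isOpen_discrete _).preimage ((continuous_apply n).comp continuous_subtype_val)



lemma unif_cont (F : SkewSys N A) {δ : ℝ} (hδ : 0 < δ) :
    ∃ m : ℕ, ∀ ω ω' : Sig N A, (∀ n : ℤ, n.natAbs ≤ m → ω.1 n = ω'.1 n) →
      ∀ x ∈ Icc (0:ℝ) 1, |F.f ω x - F.f ω' x| < δ := by
  by_contra hcon
  push_neg at hcon
  set K : ℕ → Set ((Sig N A × Sig N A) × ℝ) := fun m =>
    {q | (∀ n : ℤ, n.natAbs ≤ m → q.1.1.1 n = q.1.2.1 n) ∧ q.2 ∈ Icc (0:ℝ) 1 ∧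
      δ ≤ |F.f q.1.1 q.2 - F.f q.1.2 q.2|} with hK
  have hg : ContinuousOn (fun q : (Sig N A × Sig N A) × ℝ => F.f q.1.1 q.2 - F.f q.1.2 q.2)
      ((univ : Set (Sig N A × Sig N A)) ×ˢ Icc 0 1) := by
    have h1 : ContinuousOn (fun q : (Sig N A × Sig N A) × ℝ => F.f q.1.1 q.2)
        ((univ : Set (Sig N A × Sig N A)) ×ˢ Icc 0 1) := by
      exact F.cont.comp ((continuous_fst.fst.prodMk continuous_snd).continuousOn)
        (fun q hq => ⟨trivial, hq.2⟩)
    have h2 : ContinuousOn (fun q : (Sig N A × Sig N A) × ℝ => F.f q.1.2 q.2)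
        ((univ : Set (Sig N A × Sig N A)) ×ˢ Icc 0 1) := by
      exact F.cont.comp ((continuous_fst.snd.prodMk continuous_snd).continuousOn)
        (fun q hq => ⟨trivial, hq.2⟩)
    exact h1.sub h2
  have hDcl : ∀ m : ℕ, IsClosed {q : (Sig N A × Sig N A) × ℝ |
      ∀ n : ℤ, n.natAbs ≤ m → q.1.1.1 n = q.1.2.1 n} := by
    intro m
    have : {q : (Sig N A × Sig N A) × ℝ | ∀ n : ℤ, n.natAbs ≤ m → q.1.1.1 n = q.1.2.1 n}
        = ⋂ n ∈ Finset.Icc (-(m:ℤ)) (m:ℤ),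
          {q : (Sig N A × Sig N A) × ℝ | q.1.1.1 n = q.1.2.1 n} := by
      ext q
      simp only [mem_setOf_eq, mem_iInter, Finset.mem_Icc]
      exact ⟨fun h n hn => h n (by omega), fun h n hn => h n (by omega)⟩
    rw [this]
    refine isClosed_biInter fun n _ => isClosed_eq ?_ ?_
    · exact (continuous_apply n).comp (continuous_subtype_val.comp (continuous_fst.comp continuous_fst))
    · exact (continuous_apply n).comp (continuous_subtype_val.comp (continuous_snd.comp continuous_fst))
  have hKsub : ∀ m, K m ⊆ (univ : Set (Sig N A × Sig N A)) ×ˢ Icc 0 1 :=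
    fun m q hq => ⟨trivial, hq.2.1⟩
  have hKcl : ∀ m, IsClosed (K m) := by
    intro m
    have : K m = {q : (Sig N A × Sig N A) × ℝ | ∀ n : ℤ, n.natAbs ≤ m → q.1.1.1 n = q.1.2.1 n}
        ∩ (((univ : Set (Sig N A × Sig N A)) ×ˢ Icc 0 1) ∩
          (fun q : (Sig N A × Sig N A) × ℝ => F.f q.1.1 q.2 - F.f q.1.2 q.2) ⁻¹'
            {y : ℝ | δ ≤ |y|}) := by
      ext q
      constructor
      · intro h; exact ⟨h.1, ⟨⟨trivial, h.2.1⟩, h.2.2⟩⟩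
      · intro h; exact ⟨h.1, h.2.1.2, h.2.2⟩
    rw [this]
    refine (hDcl m).inter (ContinuousOn.preimage_isClosed_of_isClosed hg ?_ ?_)
    · exact isClosed_univ.prod isClosed_Icc
    · exact isClosed_le continuous_const continuous_abs
  have hKmono : ∀ m : ℕ, K (m+1) ⊆ K m := by
    intro m q hq
    exact ⟨fun n hn => hq.1 n (by omega), hq.2.1, hq.2.2⟩
  have hKne : ∀ m : ℕ, (K m).Nonempty := by
    intro m
    obtain ⟨ω, ω', hag, x, hx, hge⟩ := hcon m
    exact ⟨((ω, ω'), x), hag, hx, hge⟩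
  have hKcomp : IsCompact (K 0) :=
    ((isCompact_univ.prod isCompact_Icc).of_isClosed_subset (hKcl 0) (hKsub 0))
  obtain ⟨q, hq⟩ := IsCompact.nonempty_iInter_of_sequence_nonempty_isCompact_isClosed
    K hKmono hKne hKcomp hKcl
  have heq : q.1.1 = q.1.2 := by
    apply Subtype.ext
    funext n
    have := (mem_iInter.mp hq n.natAbs).1 n le_rfl
    exact this
  have := (mem_iInter.mp hq 0).2.2
  rw [heq] at this
  simp at this
  linarith

lemma div_maps_icc {a : ℝ} (ha1 : 1 < a) : MapsTo (fun y : ℝ => y / a) (Icc 0 1) (Icc 0 1) := by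
  intro y hy
  have ha0 : (0:ℝ) < a := lt_trans one_pos ha1
  constructor
  · exact div_nonneg hy.1 ha0.le
  · rw [div_le_one ha0]; linarith [hy.2]

/-- Scale a skew system by `a` and precompose with a continuous reparametrisation `t`. -/
noncomputable def scaleTrunc (F : SkewSys N A) (t : Sig N A → Sig N A) (ht : Continuous t)
    (a : ℝ) (ha1 : 1 < a) (haM : ∀ ω, ∀ x ∈ Icc (0:ℝ) 1, a * F.f ω x < 1) : SkewSys N A where
  f := fun ω x => a * F.f (t ω) x
  fInv := fun ω y => F.fInv (t ω) (y / a)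
  contDiff := fun ω => contDiffOn_const.mul (F.contDiff (t ω))
  deriv_pos := fun ω x hx => by
    rw [derivWithin_const_mul a
      (((F.contDiff (t ω)).differentiableOn one_ne_zero) x hx)]
    exact mul_pos (lt_trans one_pos ha1) (F.deriv_pos (t ω) x hx)
  maps_in := fun ω x hx =>
    ⟨mul_pos (lt_trans one_pos ha1) (F.maps_in (t ω) hx).1, haM (t ω) x hx⟩
  leftInv := fun ω x hx => by
    have ha0 : a ≠ 0 := by linarith
    show F.fInv (t ω) (a * F.f (t ω) x / a) = x
    rw [mul_div_cancel_left₀ _ ha0]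
    exact F.leftInv (t ω) x hx
  inv_contDiff := fun ω =>
    (F.inv_contDiff (t ω)).comp (contDiffOn_id.div_const a) (div_maps_icc ha1)
  cont := by
    have hφ : Continuous (fun p : Sig N A × ℝ => (t p.1, p.2)) :=
      (ht.comp continuous_fst).prodMk continuous_snd
    exact continuousOn_const.mul
      (F.cont.comp hφ.continuousOn (fun p hp => ⟨trivial, hp.2⟩))
  cont_deriv := by
    have hφ : Continuous (fun p : Sig N A × ℝ => (t p.1, p.2)) :=
      (ht.comp continuous_fst).prodMk continuous_snd
    have base : ContinuousOn
        (fun p : Sig N A × ℝ => a * derivWithin (F.f (t p.1)) (Icc 0 1) p.2)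
        (univ ×ˢ Icc 0 1) :=
      continuousOn_const.mul
        (F.cont_deriv.comp hφ.continuousOn (fun p hp => ⟨trivial, hp.2⟩))
    exact base.congr (fun p hp => derivWithin_const_mul a
      (((F.contDiff (t p.1)).differentiableOn one_ne_zero) p.2 hp.2))
  inv_cont := by
    have hψ : Continuous (fun p : Sig N A × ℝ => (t p.1, p.2 / a)) :=
      (ht.comp continuous_fst).prodMk (continuous_snd.div_const a)
    exact F.inv_cont.comp hψ.continuousOn (fun p hp => ⟨trivial, div_maps_icc ha1 hp.2⟩)
  inv_cont_deriv := by
    have hψ : Continuous (fun p : Sig N A × ℝ => (t p.1, p.2 / a)) :=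
      (ht.comp continuous_fst).prodMk (continuous_snd.div_const a)
    have base : ContinuousOn
        (fun p : Sig N A × ℝ => derivWithin (F.fInv (t p.1)) (Icc 0 1) (p.2 / a) * (1 / a))
        (univ ×ˢ Icc 0 1) :=
      (F.inv_cont_deriv.comp hψ.continuousOn
        (fun p hp => ⟨trivial, div_maps_icc ha1 hp.2⟩)).mul continuousOn_const
    refine base.congr (fun p hp => ?_)
    have hud : UniqueDiffWithinAt ℝ (Icc (0:ℝ) 1) p.2 := uniqueDiffOn_Icc one_pos p.2 hp.2
    have hg : DifferentiableWithinAt ℝ (F.fInv (t p.1)) (Icc 0 1) (p.2 / a) :=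
      ((F.inv_contDiff (t p.1)).differentiableOn one_ne_zero) _ (div_maps_icc ha1 hp.2)
    have hh : DifferentiableWithinAt ℝ (fun y : ℝ => y / a) (Icc 0 1) p.2 :=
      (differentiable_id.div_const a).differentiableAt.differentiableWithinAt
    have hcomp : (fun y => F.fInv (t p.1) (y / a))
        = (F.fInv (t p.1)) ∘ (fun y : ℝ => y / a) := rfl
    show derivWithin (fun y => F.fInv (t p.1) (y / a)) (Icc 0 1) p.2 = _
    rw [hcomp, derivWithin_comp p.2 hg hh (div_maps_icc ha1)]
    congr 1
    have : HasDerivWithinAt (fun y : ℝ => y / a) (1 / a) (Icc 0 1) p.2 := by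
      simpa using (hasDerivWithinAt_id p.2 (Icc (0:ℝ) 1)).div_const a
    exact this.derivWithin hud

/-- If `F₁ ≺ F₂` in `𝒮`, then there is a multistep `G ∈ 𝒮` with
`F₁ ≺ G ≺ F₂`. -/
theorem multistep_between {N : ℕ} {A : Fin N → Fin N → Bool} (hN : 2 ≤ N)
    (htrans : ShiftTransitive N A) (F₁ F₂ : SkewSys N A) (hprec : Prec F₁ F₂) :
    ∃ G : SkewSys N A, Multistep G ∧ Prec F₁ G ∧ Prec G F₂ := by
  obtain (he | hne) := isEmpty_or_nonempty (Sig N A)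
  · exact ⟨F₁, ⟨0, fun ω => (he.false ω).elim⟩, fun ω => (he.false ω).elim,
      fun ω => (he.false ω).elim⟩
  obtain ⟨ω₀⟩ := hne
  -- compactness setup
  set K : Set (Sig N A × ℝ) := (univ : Set (Sig N A)) ×ˢ Icc 0 1 with hKdef
  have hKc : IsCompact K := isCompact_univ.prod isCompact_Icc
  have hKne : K.Nonempty := ⟨(ω₀, 0), trivial, le_rfl, one_pos.le⟩
  -- minimum gap ε between F₁ and F₂
  obtain ⟨pε, hpε, hpεmin⟩ := hKc.exists_isMinOn hKne (F₂.cont.sub F₁.cont)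
  set ε : ℝ := F₂.f pε.1 pε.2 - F₁.f pε.1 pε.2 with hεdef
  have hε : 0 < ε := sub_pos.2 (hprec pε.1 pε.2 hpε.2)
  have hεle : ∀ ω : Sig N A, ∀ x ∈ Icc (0:ℝ) 1, ε ≤ F₂.f ω x - F₁.f ω x := by
    intro ω x hx
    exact (isMinOn_iff.mp hpεmin) (ω, x) ⟨trivial, hx⟩
  -- minimum μ and maximum M of F₁
  obtain ⟨pμ, hpμ, hpμmin⟩ := hKc.exists_isMinOn hKne F₁.cont
  set μ : ℝ := F₁.f pμ.1 pμ.2 with hμdef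
  have hμ : 0 < μ := (F₁.maps_in pμ.1 hpμ.2).1
  have hμle : ∀ ω : Sig N A, ∀ x ∈ Icc (0:ℝ) 1, μ ≤ F₁.f ω x := by
    intro ω x hx
    exact (isMinOn_iff.mp hpμmin) (ω, x) ⟨trivial, hx⟩
  obtain ⟨pM, hpM, hpMmax⟩ := hKc.exists_isMaxOn hKne F₁.cont
  set M : ℝ := F₁.f pM.1 pM.2 with hMdef
  have hM0 : 0 < M := (F₁.maps_in pM.1 hpM.2).1
  have hM1 : M < 1 := (F₁.maps_in pM.1 hpM.2).2
  have hMle : ∀ ω : Sig N A, ∀ x ∈ Icc (0:ℝ) 1, F₁.f ω x ≤ M := by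
    intro ω x hx
    exact (isMaxOn_iff.mp hpMmax) (ω, x) ⟨trivial, hx⟩
  have hμM : μ ≤ M := hμle pM.1 pM.2 hpM.2
  -- parameters
  set δa : ℝ := min (ε/4) ((1-M)/(2*M)) with hδadef
  have hδa : 0 < δa := lt_min (by linarith) (div_pos (by linarith) (by linarith))
  set a : ℝ := 1 + δa with hadef
  have ha1 : 1 < a := by rw [hadef]; linarith
  have ha0 : 0 < a := lt_trans one_pos ha1
  have haM : a * M < 1 := by
    have h1 : δa ≤ (1-M)/(2*M) := min_le_right _ _
    have h2 : δa * M ≤ (1-M)/(2*M) * M := mul_le_mul_of_nonneg_right h1 hM0.le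
    have h3 : (1-M)/(2*M) * M = (1-M)/2 := by
      field_simp
    have h4 : a * M = M + δa * M := by rw [hadef]; ring
    linarith
  have haMall : ∀ ω : Sig N A, ∀ x ∈ Icc (0:ℝ) 1, a * F₁.f ω x < 1 := by
    intro ω x hx
    have h1 := hMle ω x hx
    have h2 : a * F₁.f ω x ≤ a * M := mul_le_mul_of_nonneg_left h1 ha0.le
    linarith
  -- uniform continuity scale
  have hδ' : 0 < δa * μ / 2 := by positivity
  obtain ⟨m, hm⟩ := unif_cont F₁ hδ'
  -- the multistep system
  refine ⟨scaleTrunc F₁ (trunc ω₀ m) (trunc_continuous ω₀ m) a ha1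
    (fun ω x hx => haMall ω x hx), ?_, ?_, ?_⟩
  · refine ⟨m, fun ω ω' h => funext fun x => ?_⟩
    show a * F₁.f (trunc ω₀ m ω) x = a * F₁.f (trunc ω₀ m ω') x
    rw [trunc_eq ω₀ m ω ω' h]
  · intro ω x hx
    show F₁.f ω x < a * F₁.f (trunc ω₀ m ω) x
    have hag : ∀ n : ℤ, n.natAbs ≤ m → ω.1 n = (trunc ω₀ m ω).1 n :=
      fun n hn => (trunc_agree ω₀ m ω n hn).symm
    have h1 := hm ω (trunc ω₀ m ω) hag x hx
    have h2 := hμle (trunc ω₀ m ω) x hx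
    have h3 := abs_lt.mp h1
    have hexp : a * F₁.f (trunc ω₀ m ω) x
        = F₁.f (trunc ω₀ m ω) x + δa * F₁.f (trunc ω₀ m ω) x := by rw [hadef]; ring
    have h4 : δa * μ ≤ δa * F₁.f (trunc ω₀ m ω) x := mul_le_mul_of_nonneg_left h2 hδa.le
    linarith
  · intro ω x hx
    show a * F₁.f (trunc ω₀ m ω) x < F₂.f ω x
    have hag : ∀ n : ℤ, n.natAbs ≤ m → ω.1 n = (trunc ω₀ m ω).1 n :=
      fun n hn => (trunc_agree ω₀ m ω n hn).symm
    have h1 := hm ω (trunc ω₀ m ω) hag x hx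
    have h3 := abs_lt.mp h1
    have h2 := hMle (trunc ω₀ m ω) x hx
    have h4 := hεle ω x hx
    have h5 : δa ≤ ε/4 := min_le_left _ _
    have h6 : μ ≤ 1 := by linarith
    have hexp : a * F₁.f (trunc ω₀ m ω) x
        = F₁.f (trunc ω₀ m ω) x + δa * F₁.f (trunc ω₀ m ω) x := by rw [hadef]; ring
    have h7 : δa * F₁.f (trunc ω₀ m ω) x ≤ δa * M := mul_le_mul_of_nonneg_left h2 hδa.le
    have h8 : δa * M ≤ δa * 1 := mul_le_mul_of_nonneg_left hM1.le hδa.le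
    have h9 : δa * μ ≤ δa * 1 := mul_le_mul_of_nonneg_left h6 hδa.le
    linarith
end SkewPaper
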